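/- Let V be a finite-dimensional real vector space, α a nonzero linear form on V, and β an alternating 2-form on V. Then the codimension in V of the subspace {v ∈ V | α(v) = 0 and ι(v)β = 0 on ker α} is odd. Consequently the (pointwise) class of a rank-1 Pfaffian system is always odd. -/

import Mathlib

open Module

/-- The radical of the restriction of a bilinear form `β` to a subspace `H`. -/
def bilinRadical {V : Type*} [AddCommGroup V] [Module ℝ V]
    (β : V →ₗ[ℝ] V →ₗ[ℝ] ℝ) (H : Submodule ℝ V) : Submodule ℝ V where
  carrier := {v | v ∈ H ∧ ∀ w ∈ H, β v w = 0}
  add_mem' := fun ha hb => ⟨H.add_mem ha.1 hb.1, fun w hw => by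
    simp [map_add, ha.2 w hw, hb.2 w hw]⟩
  zero_mem' := ⟨H.zero_mem, fun w _ => by simp⟩
  smul_mem' := fun c a ha => ⟨H.smul_mem c ha.1, fun w hw => by
    simp [ha.2 w hw]⟩

lemma mem_bilinRadical {V : Type*} [AddCommGroup V] [Module ℝ V]
    (β : V →ₗ[ℝ] V →ₗ[ℝ] ℝ) (H : Submodule ℝ V) (x : V) :
    x ∈ bilinRadical β H ↔ x ∈ H ∧ ∀ w ∈ H, β x w = 0 := Iff.rfl

lemma skew_of_alt {W : Type*} [AddCommGroup W] [Module ℝ W]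
    (B : W →ₗ[ℝ] W →ₗ[ℝ] ℝ) (halt : ∀ v, B v v = 0) (u v : W) : B u v = - B v u := by
  have h := halt (u + v)
  simp only [map_add, LinearMap.add_apply, halt] at h
  linarith

universe u

lemma even_aux : ∀ (n : ℕ) (W : Type u) [AddCommGroup W] [Module ℝ W]
    [FiniteDimensional ℝ W] (B : W →ₗ[ℝ] W →ₗ[ℝ] ℝ), (∀ v, B v v = 0) →
    finrank ℝ W ≤ n →
    Even (finrank ℝ W - finrank ℝ (bilinRadical B ⊤)) := by
  intro n
  induction n with
  | zero =>
    intro W _ _ _ B halt h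
    have : finrank ℝ W - finrank ℝ (bilinRadical B ⊤) = 0 := by omega
    rw [this]; exact Even.zero
  | succ n ih =>
    intro W _ _ _ B halt h
    by_cases hB : ∀ u v : W, B u v = 0
    · have : bilinRadical B ⊤ = ⊤ := by
        ext x; simp [mem_bilinRadical, hB]
      rw [this]
      simp
    · push_neg at hB
      obtain ⟨u, v, huv⟩ := hB
      set w : W := (B u v)⁻¹ • v with hw
      have hBuw : B u w = 1 := by
        simp [hw, inv_mul_cancel₀ huv]
      have hBwu : B w u = -1 := by
        rw [skew_of_alt B halt, hBuw]
      -- the symplectic complement of span {u, w}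
      set W' : Submodule ℝ W := LinearMap.ker (B u) ⊓ LinearMap.ker (B w) with hW'
      have hmem : ∀ x : W, x ∈ W' ↔ B u x = 0 ∧ B w x = 0 := by
        intro x; simp [hW', LinearMap.mem_ker]
      -- decomposition of arbitrary elements
      have hdecomp : ∀ x : W, ∃ y ∈ W', x = (-(B w x)) • u + (B u x) • w + y := by
        intro x
        refine ⟨x - (-(B w x)) • u - (B u x) • w, ?_, by abel⟩
        rw [hmem]
        constructor
        · simp [halt, hBuw]
        · simp only [map_sub, map_smul, map_neg, LinearMap.neg_apply, LinearMap.smul_apply,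
            smul_eq_mul, halt, hBwu]
          ring
      set P : Submodule ℝ W := Submodule.span ℝ (Set.range ![u, w]) with hP
      have hli : LinearIndependent ℝ ![u, w] := by
        rw [LinearIndependent.pair_iff]
        intro s t hst
        have h1 : B u (s • u + t • w) = 0 := by rw [hst]; simp
        have h2 : B w (s • u + t • w) = 0 := by rw [hst]; simp
        simp [halt, hBuw, hBwu] at h1 h2
        exact ⟨by linarith, h1⟩
      have hPrank : finrank ℝ P = 2 := by
        rw [hP, finrank_span_eq_card hli]
        simp
      have hsup : P ⊔ W' = ⊤ := by
        rw [eq_top_iff]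
        intro x _
        obtain ⟨y, hy, hxy⟩ := hdecomp x
        rw [hxy]
        have huP : u ∈ P := Submodule.subset_span (Set.mem_range.2 ⟨0, rfl⟩)
        have hwP : w ∈ P := Submodule.subset_span (Set.mem_range.2 ⟨1, rfl⟩)
        exact Submodule.add_mem _ (Submodule.add_mem _
          (Submodule.mem_sup_left (Submodule.smul_mem _ _ huP))
          (Submodule.mem_sup_left (Submodule.smul_mem _ _ hwP)))
          (Submodule.mem_sup_right hy)
      have hinf : P ⊓ W' = ⊥ := by
        rw [eq_bot_iff]
        intro x hx
        obtain ⟨hxP, hxW'⟩ := Submodule.mem_inf.1 hx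
        rw [hP, show Set.range ![u, w] = {u, w} by
          ext x; simp [Fin.exists_fin_two, or_comm], Submodule.mem_span_pair] at hxP
        obtain ⟨a, b, hab⟩ := hxP
        rw [hmem] at hxW'
        have h1 : B u x = 0 := hxW'.1
        have h2 : B w x = 0 := hxW'.2
        rw [← hab] at h1 h2
        simp [halt, hBuw, hBwu] at h1 h2
        simp only [Submodule.mem_bot]
        rw [← hab, h1]
        have : a = 0 := by linarith
        simp [this]
      have hWrank : finrank ℝ W = 2 + finrank ℝ W' := by
        have := Submodule.finrank_sup_add_finrank_inf_eq P W'
        rw [hsup, hinf, hPrank, finrank_top, finrank_bot] at this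
        omega
      -- restrict B to W'
      set B' : W' →ₗ[ℝ] W' →ₗ[ℝ] ℝ := B.compl₁₂ W'.subtype W'.subtype with hB'
      have halt' : ∀ x : W', B' x x = 0 := fun x => halt x
      have hradeq : Submodule.map W'.subtype (bilinRadical B' ⊤) = bilinRadical B ⊤ := by
        ext x
        simp only [Submodule.mem_map, mem_bilinRadical, Submodule.mem_top, true_and]
        constructor
        · rintro ⟨⟨y, hyW'⟩, hy, rfl⟩
          intro z _
          obtain ⟨z₀, hz₀, hz⟩ := hdecomp z
          rw [hmem] at hyW'
          have hyu : B y u = 0 := by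
            rw [skew_of_alt B halt, hyW'.1]; ring
          have hyw : B y w = 0 := by
            rw [skew_of_alt B halt, hyW'.2]; ring
          have hyz₀ : B y z₀ = 0 := hy ⟨z₀, hz₀⟩ trivial
          rw [hz]
          simp only [map_add, map_smul, LinearMap.add_apply, LinearMap.smul_apply,
            hyu, hyw, Submodule.coe_subtype]
          rw [hyz₀]
          simp
        · intro hx
          have hxW' : x ∈ W' := by
            rw [hmem]
            constructor
            · rw [skew_of_alt B halt, hx u trivial]; ring
            · rw [skew_of_alt B halt, hx w trivial]; ring
          exact ⟨⟨x, hxW'⟩, fun z _ => hx z trivial, rfl⟩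
      have hrankeq : finrank ℝ (bilinRadical B' ⊤) = finrank ℝ (bilinRadical B ⊤) := by
        rw [← hradeq, Submodule.finrank_map_subtype_eq]
      have hrle : finrank ℝ (bilinRadical B' ⊤) ≤ finrank ℝ W' :=
        Submodule.finrank_le _
      have hIH := ih W' B' halt' (by omega)
      obtain ⟨k, hk⟩ := hIH
      exact ⟨k + 1, by omega⟩

/-- For a nonzero linear form `α` on a finite-dimensional real
vector space `V` and an alternating 2-form `β`, the codimension of
`Δ = {v ∈ ker α | β v w = 0 for all w ∈ ker α}` is odd.  (Hence the pointwise
class of a rank-1 Pfaffian system is always odd.) -/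
theorem stmt3 (V : Type*) [AddCommGroup V] [Module ℝ V] [FiniteDimensional ℝ V]
    (α : V →ₗ[ℝ] ℝ) (hα : α ≠ 0)
    (β : V →ₗ[ℝ] V →ₗ[ℝ] ℝ) (halt : ∀ v, β v v = 0) :
    Odd (finrank ℝ V - finrank ℝ (bilinRadical β (LinearMap.ker α))) := by
  set H : Submodule ℝ V := LinearMap.ker α with hH
  have hrange : finrank ℝ (LinearMap.range α) = 1 := by
    have h1 : finrank ℝ (LinearMap.range α) ≤ 1 := by
      simpa using Submodule.finrank_le (LinearMap.range α)
    have h2 : finrank ℝ (LinearMap.range α) ≠ 0 := by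
      rw [ne_eq, Submodule.finrank_eq_zero, LinearMap.range_eq_bot]
      exact hα
    omega
  have hHrank : finrank ℝ H + 1 = finrank ℝ V := by
    have := LinearMap.finrank_range_add_finrank_ker α
    rw [← hH] at this
    omega
  set B' : H →ₗ[ℝ] H →ₗ[ℝ] ℝ := β.compl₁₂ H.subtype H.subtype with hB'
  have halt' : ∀ x : H, B' x x = 0 := fun x => halt x
  have hradeq : Submodule.map H.subtype (bilinRadical B' ⊤) = bilinRadical β H := by
    ext x
    simp only [Submodule.mem_map, mem_bilinRadical, Submodule.mem_top, true_and]
    constructor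
    · rintro ⟨⟨y, hyH⟩, hy, rfl⟩
      exact ⟨hyH, fun z hz => by simpa [hB'] using hy ⟨z, hz⟩ trivial⟩
    · rintro ⟨hxH, hx⟩
      exact ⟨⟨x, hxH⟩, fun z _ => by simpa [hB'] using hx z z.2, rfl⟩
  have hrankeq : finrank ℝ (bilinRadical B' ⊤) = finrank ℝ (bilinRadical β H) := by
    rw [← hradeq, Submodule.finrank_map_subtype_eq]
  have hrle : finrank ℝ (bilinRadical B' ⊤) ≤ finrank ℝ H := Submodule.finrank_le _
  obtain ⟨k, hk⟩ := even_aux (finrank ℝ H) H B' halt' le_rfl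
  exact ⟨k, by omega⟩
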